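/- arXiv:1711.01228 — 2 statements merged into one kernel-verified Lean document; each statement's English description precedes it below -/
import Mathlib

section
/- Let f(X) = Σ_{i<j} w_ij (‖x_i - x_j‖ - d_ij)² be the stress of a placement X ∈ R^{n×d}, with weights w_ij ≥ 0 and target distances d_ij > 0. Define g(X,Y) = tr(Xᵀ L^W X) - 2 tr(Xᵀ L^Y Y) + C, where C = Σ_{i<j} w_ij d_ij², L^W is the weighted Laplacian with off-diagonal entries -w_ij, and L^Y has off-diagonal entries -w_ij d_ij / ‖y_i - y_j‖ when y_i ≠ y_j and 0 otherwise (diagonals set so rows sum to zero). Then f(X) ≤ g(X,Y) for all X, Y, and f(X) = g(X,X). -/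
open Finset Matrix
open scoped Classical

/-- The stress function `f(X) = Σ_{i<j} w_ij (‖x_i - x_j‖ - d_ij)²`. -/
noncomputable def stress {n d : ℕ} (w dist : Fin n → Fin n → ℝ)
    (X : Fin n → EuclideanSpace ℝ (Fin d)) : ℝ :=
  ∑ i, ∑ j, if i < j then w i j * (‖X i - X j‖ - dist i j) ^ 2 else 0

/-- The weighted Laplacian `L^W`: off-diagonal entries `-w_ij`, zero row sums. -/
noncomputable def lapW {n : ℕ} (w : Fin n → Fin n → ℝ) :
    Matrix (Fin n) (Fin n) ℝ :=
  Matrix.of fun i j =>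
    if i = j then ∑ k ∈ univ.filter (· ≠ i), w i k else -(w i j)

/-- The Laplacian `L^Y`: off-diagonal entries `-w_ij d_ij / ‖y_i - y_j‖`
when `y_i ≠ y_j`, zero otherwise; zero row sums. -/
noncomputable def lapY {n d : ℕ} (w dist : Fin n → Fin n → ℝ)
    (Y : Fin n → EuclideanSpace ℝ (Fin d)) : Matrix (Fin n) (Fin n) ℝ :=
  Matrix.of fun i j =>
    if i = j then
      ∑ k ∈ univ.filter (· ≠ i),
        (if Y i = Y k then 0 else w i k * dist i k / ‖Y i - Y k‖)
    else
      (if Y i = Y j then 0 else -(w i j * dist i j / ‖Y i - Y j‖))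

/-- The matrix of a placement `X : Fin n → EuclideanSpace ℝ (Fin d)`. -/
def placementMatrix {n d : ℕ} (X : Fin n → EuclideanSpace ℝ (Fin d)) :
    Matrix (Fin n) (Fin d) ℝ :=
  Matrix.of fun i k => X i k

/-- The majorizing function `g(X,Y) = tr(Xᵀ L^W X) - 2 tr(Xᵀ L^Y Y) + C`. -/
noncomputable def majorant {n d : ℕ} (w dist : Fin n → Fin n → ℝ)
    (X Y : Fin n → EuclideanSpace ℝ (Fin d)) : ℝ :=
  Matrix.trace ((placementMatrix X)ᵀ * lapW w * placementMatrix X) -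
    2 * Matrix.trace ((placementMatrix X)ᵀ * lapY w dist Y * placementMatrix Y) +
    ∑ i, ∑ j, if i < j then w i j * dist i j ^ 2 else 0

/-- Real inner product on `EuclideanSpace` as a finite sum. -/
lemma inner_eq_sum {d : ℕ} (u v : EuclideanSpace ℝ (Fin d)) :
    (inner ℝ u v : ℝ) = ∑ k, u k * v k := by
  simp [PiLp.inner_apply, RCLike.inner_apply, mul_comm]

/-- Trace identity for a generic Laplacian built from a symmetric weight `s`. -/
lemma trace_lap {n d : ℕ} (s : Fin n → Fin n → ℝ) (hs : ∀ i j, s i j = s j i)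
    (X X' : Fin n → EuclideanSpace ℝ (Fin d)) :
    Matrix.trace ((placementMatrix X)ᵀ *
        (Matrix.of fun i j => if i = j then ∑ k ∈ univ.filter (· ≠ i), s i k else -(s i j)) *
        placementMatrix X') =
      ∑ i, ∑ j, if i < j then s i j * (inner ℝ (X i - X j) (X' i - X' j) : ℝ) else 0 := by
  set D : Fin n → Fin n → ℝ := fun i j => ∑ c, X i c * X' j c with hD
  have expand : Matrix.trace ((placementMatrix X)ᵀ *
      (Matrix.of fun i j => if i = j then ∑ k ∈ univ.filter (· ≠ i), s i k else -(s i j)) *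
      placementMatrix X') =
      ∑ i, ∑ j, (if i = j then ∑ k ∈ univ.filter (· ≠ i), s i k else -(s i j)) * D i j := by
    simp only [Matrix.trace, Matrix.diag_apply, Matrix.mul_apply, Matrix.transpose_apply,
      placementMatrix, Matrix.of_apply, Finset.sum_mul, Finset.mul_sum, hD]
    rw [Finset.sum_comm]
    conv_lhs => enter [2, j]; rw [Finset.sum_comm]
    rw [Finset.sum_comm]
    refine Finset.sum_congr rfl fun i _ => Finset.sum_congr rfl fun j _ =>
      Finset.sum_congr rfl fun c _ => ?_
    ring
  rw [expand]
  have step2 : ∀ i : Fin n,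
      ∑ j, (if i = j then ∑ k ∈ univ.filter (· ≠ i), s i k else -(s i j)) * D i j
        = ∑ j, (if i = j then 0 else s i j * (D i i - D i j)) := by
    intro i
    rw [Finset.sum_eq_sum_sdiff_singleton_add (Finset.mem_univ i),
        Finset.sum_eq_sum_sdiff_singleton_add (Finset.mem_univ i)
          (fun j => if i = j then 0 else s i j * (D i i - D i j))]
    have hfil : univ.filter (· ≠ i) = (univ : Finset (Fin n)) \ {i} := by ext x; simp
    simp only [if_true, eq_self_iff_true, add_zero, hfil]
    rw [Finset.sum_mul, ← Finset.sum_add_distrib]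
    refine Finset.sum_congr rfl fun j hj => ?_
    have hij : i ≠ j := by
      simp only [Finset.mem_sdiff, Finset.mem_singleton] at hj
      exact fun h => hj.2 h.symm
    rw [if_neg hij, if_neg hij]
    ring
  simp only [step2]
  have step3 : (∑ i, ∑ j, if i = j then 0 else s i j * (D i i - D i j))
      = ∑ i, ∑ j, if i < j then (s i j * (D i i - D i j) + s j i * (D j j - D j i)) else 0 := by
    set F : Fin n → Fin n → ℝ := fun i j => s i j * (D i i - D i j) with hF
    have h : ∀ i j : Fin n, (if i = j then 0 else F i j) =
        (if i < j then F i j else 0) + (if j < i then F i j else 0) := by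
      intro i j
      rcases lt_trichotomy i j with h | h | h
      · simp [h, h.ne, not_lt_of_gt h]
      · simp [h]
      · simp [h, h.ne', not_lt_of_gt h]
    show (∑ i, ∑ j, if i = j then 0 else F i j) = ∑ i, ∑ j, if i < j then (F i j + F j i) else 0
    simp only [h, Finset.sum_add_distrib]
    rw [Finset.sum_comm (f := fun i j => if j < i then F i j else 0)]
    rw [← Finset.sum_add_distrib]
    refine Finset.sum_congr rfl fun i _ => ?_
    rw [← Finset.sum_add_distrib]
    refine Finset.sum_congr rfl fun j _ => ?_
    by_cases hij : i < j <;> simp [hij]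
  rw [step3]
  refine Finset.sum_congr rfl fun i _ => Finset.sum_congr rfl fun j _ => ?_
  by_cases hij : i < j
  · rw [if_pos hij, if_pos hij, hs j i, inner_eq_sum]
    simp only [PiLp.sub_apply, hD, sub_mul, mul_sub, Finset.sum_sub_distrib]
    ring
  · rw [if_neg hij, if_neg hij]

/-- Pointwise Cauchy–Schwarz inequality for one pair. -/
lemma key_le {d : ℕ} (wij dd : ℝ) (hw : 0 ≤ wij) (hd : 0 < dd)
    (u a b : EuclideanSpace ℝ (Fin d)) :
    wij * (‖u‖ - dd) ^ 2 ≤ wij * ‖u‖ ^ 2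
      - 2 * ((if a = b then 0 else wij * dd / ‖a - b‖) * (inner ℝ u (a - b) : ℝ))
      + wij * dd ^ 2 := by
  have h2 : (if a = b then 0 else wij * dd / ‖a - b‖) * (inner ℝ u (a - b) : ℝ)
      ≤ wij * dd * ‖u‖ := by
    by_cases h : a = b
    · rw [if_pos h]; simpa using by positivity
    · rw [if_neg h]
      have hv : (0:ℝ) < ‖a - b‖ := by
        rw [norm_pos_iff]; exact sub_ne_zero.mpr h
      have hcs : (inner ℝ u (a - b) : ℝ) ≤ ‖u‖ * ‖a - b‖ := real_inner_le_norm u (a - b)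
      have hnn : 0 ≤ wij * dd / ‖a - b‖ := by positivity
      calc wij * dd / ‖a - b‖ * (inner ℝ u (a - b) : ℝ)
          ≤ wij * dd / ‖a - b‖ * (‖u‖ * ‖a - b‖) := mul_le_mul_of_nonneg_left hcs hnn
        _ = wij * dd * ‖u‖ := by field_simp
  nlinarith [norm_nonneg u]

/-- Pointwise equality for one pair when `Y = X`. -/
lemma key_eq {d : ℕ} (wij dd : ℝ) (a b : EuclideanSpace ℝ (Fin d)) :
    wij * (‖a - b‖ - dd) ^ 2 = wij * ‖a - b‖ ^ 2
      - 2 * ((if a = b then 0 else wij * dd / ‖a - b‖) * (inner ℝ (a - b) (a - b) : ℝ))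
      + wij * dd ^ 2 := by
  by_cases h : a = b
  · rw [if_pos h]
    simp [h]
  · rw [if_neg h, real_inner_self_eq_norm_sq]
    have hv : (0:ℝ) < ‖a - b‖ := by
      rw [norm_pos_iff]; exact sub_ne_zero.mpr h
    field_simp
    ring

/-- `lapY` in generic Laplacian form. -/
lemma lapY_eq {n d : ℕ} (w dist : Fin n → Fin n → ℝ)
    (Y : Fin n → EuclideanSpace ℝ (Fin d)) :
    lapY w dist Y = Matrix.of fun i j =>
      if i = j then
        ∑ k ∈ univ.filter (· ≠ i),
          (fun i k => if Y i = Y k then 0 else w i k * dist i k / ‖Y i - Y k‖) i k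
      else -((fun i j => if Y i = Y j then 0 else w i j * dist i j / ‖Y i - Y j‖) i j) := by
  ext i j
  simp only [lapY, Matrix.of_apply]
  by_cases h : i = j
  · simp [h]
  · rw [if_neg h, if_neg h]
    by_cases h2 : Y i = Y j <;> simp [h2]

/-- `g(·,Y)` dominates the stress `f`, with equality on the diagonal. -/
theorem stmt_1 {n d : ℕ} (w dist : Fin n → Fin n → ℝ)
    (hw_symm : ∀ i j, w i j = w j i) (hw_nonneg : ∀ i j, 0 ≤ w i j)
    (hd_symm : ∀ i j, dist i j = dist j i)
    (hd_pos : ∀ i j, i ≠ j → 0 < dist i j) :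
    (∀ X Y : Fin n → EuclideanSpace ℝ (Fin d),
        stress w dist X ≤ majorant w dist X Y) ∧
    (∀ X : Fin n → EuclideanSpace ℝ (Fin d),
        stress w dist X = majorant w dist X X) := by
  -- Rewrite the majorant as a sum over pairs.
  have hmaj : ∀ X Y : Fin n → EuclideanSpace ℝ (Fin d),
      majorant w dist X Y = ∑ i, ∑ j, if i < j then
          (w i j * ‖X i - X j‖ ^ 2
            - 2 * ((if Y i = Y j then 0 else w i j * dist i j / ‖Y i - Y j‖) *
                (inner ℝ (X i - X j) (Y i - Y j) : ℝ))
            + w i j * dist i j ^ 2) else 0 := by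
    intro X Y
    have hsY : ∀ i j, (if Y i = Y j then 0 else w i j * dist i j / ‖Y i - Y j‖)
        = (if Y j = Y i then 0 else w j i * dist j i / ‖Y j - Y i‖) := by
      intro i j
      rw [hw_symm i j, hd_symm i j, norm_sub_rev]
      by_cases h : Y i = Y j
      · rw [if_pos h, if_pos h.symm]
      · rw [if_neg h, if_neg fun h' => h h'.symm]
    have hW : Matrix.trace ((placementMatrix X)ᵀ * lapW w * placementMatrix X)
        = ∑ i, ∑ j, if i < j then w i j * ‖X i - X j‖ ^ 2 else 0 := by
      have := trace_lap w hw_symm X X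
      unfold lapW
      rw [this]
      refine Finset.sum_congr rfl fun i _ => Finset.sum_congr rfl fun j _ => ?_
      by_cases hij : i < j
      · rw [if_pos hij, if_pos hij, real_inner_self_eq_norm_sq]
      · rw [if_neg hij, if_neg hij]
    have hY : Matrix.trace ((placementMatrix X)ᵀ * lapY w dist Y * placementMatrix Y)
        = ∑ i, ∑ j, if i < j then
            (if Y i = Y j then 0 else w i j * dist i j / ‖Y i - Y j‖) *
              (inner ℝ (X i - X j) (Y i - Y j) : ℝ) else 0 := by
      rw [lapY_eq]
      exact trace_lap _ hsY X Y
    rw [majorant, hW, hY]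
    simp only [Finset.mul_sum, ← Finset.sum_sub_distrib, ← Finset.sum_add_distrib]
    refine Finset.sum_congr rfl fun i _ => Finset.sum_congr rfl fun j _ => ?_
    by_cases hij : i < j
    · simp only [if_pos hij]
    · simp only [if_neg hij]; ring
  constructor
  · intro X Y
    rw [hmaj X Y, stress]
    refine Finset.sum_le_sum fun i _ => Finset.sum_le_sum fun j _ => ?_
    by_cases hij : i < j
    · rw [if_pos hij, if_pos hij]
      exact key_le (w i j) (dist i j) (hw_nonneg i j) (hd_pos i j hij.ne) (X i - X j) (Y i) (Y j)
    · rw [if_neg hij, if_neg hij]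
  · intro X
    rw [hmaj X X, stress]
    refine Finset.sum_congr rfl fun i _ => Finset.sum_congr rfl fun j _ => ?_
    by_cases hij : i < j
    · rw [if_pos hij, if_pos hij]
      exact key_eq (w i j) (dist i j) (X i) (X j)
    · rw [if_neg hij, if_neg hij]
end

section
/- (Ostrowski's theorem) Suppose H: R^n → R^n has fixed point x*, H is Fréchet-differentiable at x*, and the spectral radius ρ(DH(x*)) < 1. Then x* is a point of attraction of the iteration x^{(k+1)} = H(x^{(k)}): there exists ε > 0 such that for every x^{(0)} with ‖x^{(0)} - x*‖ < ε, the iterated sequence converges to x*. -/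
open Filter
open scoped ENNReal NNReal


lemma ostrowski_aux {E : Type*} [NormedAddCommGroup E] [NormedSpace ℝ E]
    (H : E → E) (xs : E) (hfix : H xs = xs) (L : E →L[ℝ] E)
    (hdiff : HasFDerivAt H L xs)
    (N : E → ℝ) (h1 : ∀ v, ‖v‖ ≤ N v) (C : ℝ) (hC : 0 < C)
    (h2 : ∀ v, N v ≤ C * ‖v‖) (h3 : ∀ u v, N (u + v) ≤ N u + N v)
    (t : ℝ) (ht0 : 0 ≤ t) (ht1 : t < 1) (h4 : ∀ v, N (L v) ≤ t * N v) :
    ∃ ε > 0, ∀ x0 : E, ‖x0 - xs‖ < ε →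
      Tendsto (fun k => H^[k] x0) atTop (nhds xs) := by
  have hNnn : ∀ v, 0 ≤ N v := fun v => (norm_nonneg v).trans (h1 v)
  set η : ℝ := (1 - t) / (2 * C) with hη
  have hηpos : 0 < η := div_pos (by linarith) (by linarith)
  have hlo := hdiff.isLittleO
  have hev := hlo.def hηpos
  rw [Metric.eventually_nhds_iff] at hev
  obtain ⟨δ, hδpos, hδ⟩ := hev
  set c : ℝ := (1 + t) / 2 with hc
  have hc0 : 0 ≤ c := by positivity
  have hc1 : c < 1 := by rw [hc]; linarith
  have hceq : t + C * η = c := by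
    rw [hη, hc]; field_simp; ring
  have key : ∀ x : E, N (x - xs) < δ → N (H x - xs) ≤ c * N (x - xs) := by
    intro x hN
    have hxd : dist x xs < δ := by
      rw [dist_eq_norm]; exact lt_of_le_of_lt (h1 _) hN
    have herr : ‖H x - xs - L (x - xs)‖ ≤ η * ‖x - xs‖ := by
      have := hδ hxd; rwa [hfix] at this
    have hsplit : H x - xs = L (x - xs) + (H x - xs - L (x - xs)) := by abel
    calc N (H x - xs) = N (L (x - xs) + (H x - xs - L (x - xs))) := by rw [← hsplit]
      _ ≤ N (L (x - xs)) + N (H x - xs - L (x - xs)) := h3 _ _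
      _ ≤ t * N (x - xs) + C * ‖H x - xs - L (x - xs)‖ := add_le_add (h4 _) (h2 _)
      _ ≤ t * N (x - xs) + C * (η * ‖x - xs‖) := by
          gcongr
      _ ≤ t * N (x - xs) + C * (η * N (x - xs)) := by
          gcongr; exact h1 _
      _ = (t + C * η) * N (x - xs) := by ring
      _ = c * N (x - xs) := by rw [hceq]
  refine ⟨δ / C, div_pos hδpos hC, fun x0 hx0 => ?_⟩
  have hN0 : N (x0 - xs) < δ := by
    calc N (x0 - xs) ≤ C * ‖x0 - xs‖ := h2 _
      _ < C * (δ / C) := by gcongr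
      _ = δ := by field_simp
  have hbound : ∀ k, N (H^[k] x0 - xs) ≤ c ^ k * N (x0 - xs) := by
    intro k
    induction k with
    | zero => simp
    | succ k ih =>
      have hlt : N (H^[k] x0 - xs) < δ :=
        lt_of_le_of_lt ih (lt_of_le_of_lt (by
          calc c ^ k * N (x0 - xs) ≤ 1 * N (x0 - xs) :=
                mul_le_mul_of_nonneg_right (pow_le_one₀ hc0 hc1.le) (hNnn _)
            _ = N (x0 - xs) := one_mul _) hN0)
      rw [Function.iterate_succ_apply']
      calc N (H (H^[k] x0) - xs) ≤ c * N (H^[k] x0 - xs) := key _ hlt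
        _ ≤ c * (c ^ k * N (x0 - xs)) := by gcongr
        _ = c ^ (k + 1) * N (x0 - xs) := by ring
  rw [tendsto_iff_norm_sub_tendsto_zero]
  apply squeeze_zero (fun k => norm_nonneg _)
    (fun k => (h1 _).trans (hbound k))
  have := (tendsto_pow_atTop_nhds_zero_of_lt_one hc0 hc1).mul_const (N (x0 - xs))
  simpa using this


lemma ostrowski_aux2 {E : Type*} [NormedAddCommGroup E] [NormedSpace ℝ E]
    (H : E → E) (xs : E) (hfix : H xs = xs) (L : E →L[ℝ] E)
    (hdiff : HasFDerivAt H L xs) (m' : ℕ) (t : ℝ) (ht0 : 0 < t) (ht1 : t < 1)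
    (hbd : ∀ x : E, ‖(L ^ (m' + 1)) x‖ ≤ t ^ (m' + 1) * ‖x‖) :
    ∃ ε > 0, ∀ x0 : E, ‖x0 - xs‖ < ε →
      Tendsto (fun k => H^[k] x0) atTop (nhds xs) := by
  set N : E → ℝ := fun x => ∑ i ∈ Finset.range (m' + 1), t⁻¹ ^ i * ‖(L ^ i) x‖ with hN
  have hti : (0:ℝ) < t⁻¹ := inv_pos.mpr ht0
  have happly : ∀ (i : ℕ) (v : E), (L ^ i) (L v) = (L ^ (i + 1)) v := by
    intro i v
    rw [pow_succ, ContinuousLinearMap.mul_apply]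
  have h1 : ∀ v, ‖v‖ ≤ N v := by
    intro v
    rw [hN]
    simp only [Finset.sum_range_succ']
    have h0 : t⁻¹ ^ 0 * ‖(L ^ 0) v‖ = ‖v‖ := by simp
    rw [h0]
    refine le_add_of_nonneg_left ?_
    exact Finset.sum_nonneg fun i _ => mul_nonneg (by positivity) (norm_nonneg _)
  set C : ℝ := (∑ i ∈ Finset.range (m' + 1), t⁻¹ ^ i * ‖(L ^ i : E →L[ℝ] E)‖) + 1 with hC
  have hCpos : 0 < C := by
    rw [hC]
    have : 0 ≤ ∑ i ∈ Finset.range (m' + 1), t⁻¹ ^ i * ‖(L ^ i : E →L[ℝ] E)‖ :=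
      Finset.sum_nonneg fun i _ => mul_nonneg (by positivity) (norm_nonneg _)
    linarith
  have h2 : ∀ v, N v ≤ C * ‖v‖ := by
    intro v
    rw [hN, hC]
    calc ∑ i ∈ Finset.range (m' + 1), t⁻¹ ^ i * ‖(L ^ i) v‖
        ≤ ∑ i ∈ Finset.range (m' + 1), t⁻¹ ^ i * ‖(L ^ i : E →L[ℝ] E)‖ * ‖v‖ := by
          refine Finset.sum_le_sum fun i _ => ?_
          rw [mul_assoc]
          exact mul_le_mul_of_nonneg_left ((L ^ i).le_opNorm v) (by positivity)
      _ = (∑ i ∈ Finset.range (m' + 1), t⁻¹ ^ i * ‖(L ^ i : E →L[ℝ] E)‖) * ‖v‖ := by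
          rw [Finset.sum_mul]
      _ ≤ ((∑ i ∈ Finset.range (m' + 1), t⁻¹ ^ i * ‖(L ^ i : E →L[ℝ] E)‖) + 1) * ‖v‖ := by
          apply mul_le_mul_of_nonneg_right _ (norm_nonneg v); linarith
  have h3 : ∀ u v, N (u + v) ≤ N u + N v := by
    intro u v
    rw [hN, ← Finset.sum_add_distrib]
    refine Finset.sum_le_sum fun i _ => ?_
    rw [← mul_add]
    refine mul_le_mul_of_nonneg_left ?_ (by positivity)
    rw [map_add]
    exact norm_add_le _ _
  have h4 : ∀ v, N (L v) ≤ t * N v := by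
    intro v
    have lhs : N (L v) = (∑ i ∈ Finset.range m', t⁻¹ ^ i * ‖(L ^ (i + 1)) v‖)
        + t⁻¹ ^ m' * ‖(L ^ (m' + 1)) v‖ := by
      simp only [hN, happly]
      rw [Finset.sum_range_succ]
    have rhs : t * N v = (∑ i ∈ Finset.range m', t⁻¹ ^ i * ‖(L ^ (i + 1)) v‖) + t * ‖v‖ := by
      rw [hN, Finset.mul_sum, Finset.sum_range_succ']
      congr 1
      · refine Finset.sum_congr rfl fun i _ => ?_
        rw [← mul_assoc]
        congr 1
        rw [pow_succ, ← mul_assoc]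
        field_simp
      · simp
    rw [lhs, rhs]
    refine (add_le_add_iff_left _).mpr ?_
    calc t⁻¹ ^ m' * ‖(L ^ (m' + 1)) v‖ ≤ t⁻¹ ^ m' * (t ^ (m' + 1) * ‖v‖) :=
          mul_le_mul_of_nonneg_left (hbd v) (by positivity)
      _ = t * ‖v‖ := by
          rw [pow_succ]
          field_simp
          rw [← mul_pow]; simp [ht0.ne']
  exact ostrowski_aux H xs hfix L hdiff N h1 C hCpos h2 h3 t ht0.le ht1 h4


lemma ostrowski_spec {n : ℕ} (hn : 0 < n) (J : Matrix (Fin n) (Fin n) ℝ)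
    (hspec : ∀ μ ∈ spectrum ℂ (J.map (algebraMap ℝ ℂ)), ‖μ‖ < 1) :
    ∃ m : ℕ, 1 ≤ m ∧ ∃ t : ℝ, 0 < t ∧ t < 1 ∧
      ∀ x : EuclideanSpace ℝ (Fin n),
        ‖((Matrix.toEuclideanCLM (𝕜 := ℝ) J) ^ m) x‖ ≤ t ^ m * ‖x‖ := by
  haveI : Nonempty (Fin n) := ⟨⟨0, hn⟩⟩
  set Jc := J.map (algebraMap ℝ ℂ) with hJc
  set Lc := Matrix.toEuclideanCLM (𝕜 := ℂ) Jc with hLc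
  haveI : Nontrivial (EuclideanSpace ℂ (Fin n) →L[ℂ] EuclideanSpace ℂ (Fin n)) :=
    inferInstance
  -- spectrum of Lc = spectrum of Jc
  have hspecLc : ∀ μ ∈ spectrum ℂ Lc, ‖μ‖ < 1 := by
    intro μ hμ
    apply hspec
    exact (AlgEquiv.spectrum_eq (Matrix.toEuclideanCLM (𝕜 := ℂ) (n := Fin n)) Jc) ▸ hμ
  -- spectral radius < 1
  have hsr : spectralRadius ℂ Lc < 1 := by
    obtain ⟨μ, hμmem, hμeq⟩ := spectrum.exists_nnnorm_eq_spectralRadius Lc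
    rw [← hμeq]
    exact_mod_cast hspecLc μ hμmem
  obtain ⟨θ, hθ1, hθ2⟩ := ENNReal.lt_iff_exists_nnreal_btwn.mp hsr
  have hθlt1 : (θ : ℝ) < 1 := by exact_mod_cast ENNReal.coe_lt_one_iff.mp hθ2
  have hθpos : (0 : ℝ) < θ := by
    have : (0 : ℝ≥0∞) < θ := zero_le.trans_lt hθ1
    exact_mod_cast ENNReal.coe_pos.mp this
  have hgel := spectrum.pow_nnnorm_pow_one_div_tendsto_nhds_spectralRadius Lc
  have hev : ∀ᶠ k : ℕ in atTop, (‖Lc ^ k‖₊ : ℝ≥0∞) ^ (1 / (k : ℝ)) < (θ : ℝ≥0∞) :=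
    hgel.eventually_lt_const hθ1
  obtain ⟨m, hmlt, hm1⟩ := (hev.and (eventually_ge_atTop 1)).exists
  have hmpos : (0 : ℝ) < (m : ℝ) := by exact_mod_cast hm1
  have hnorm : (‖Lc ^ m‖₊ : ℝ≥0∞) < (θ : ℝ≥0∞) ^ (m : ℕ) := by
    have h2 := ENNReal.rpow_lt_rpow hmlt hmpos
    rwa [← ENNReal.rpow_mul, one_div, inv_mul_cancel₀ (ne_of_gt hmpos), ENNReal.rpow_one,
      ENNReal.rpow_natCast] at h2
  have hnormR : ‖Lc ^ m‖ < (θ : ℝ) ^ m := by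
    have : ‖Lc ^ m‖₊ < θ ^ m := by exact_mod_cast hnorm
    exact_mod_cast this
  refine ⟨m, hm1, (θ : ℝ), hθpos, hθlt1, fun x => ?_⟩
  have hnp : ∀ y : EuclideanSpace ℝ (Fin n),
      ‖((WithLp.equiv 2 (Fin n → ℂ)).symm fun i => ((y i : ℝ) : ℂ))‖ = ‖y‖ := by
    intro y
    simp [EuclideanSpace.norm_eq]
  have hcomm : ∀ (A : Matrix (Fin n) (Fin n) ℝ) (y : EuclideanSpace ℝ (Fin n)),
      Matrix.toEuclideanCLM (𝕜 := ℂ) (A.map (algebraMap ℝ ℂ))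
          ((WithLp.equiv 2 (Fin n → ℂ)).symm fun i => ((y i : ℝ) : ℂ))
        = (WithLp.equiv 2 (Fin n → ℂ)).symm
            fun i => (((Matrix.toEuclideanCLM (𝕜 := ℝ) A y) i : ℝ) : ℂ) := by
    intro A y
    apply (WithLp.equiv 2 (Fin n → ℂ)).injective
    funext i
    simp only [Matrix.ofLp_toEuclideanCLM, Equiv.apply_symm_apply]
    have : (Matrix.toEuclideanCLM (𝕜 := ℝ) A y) i
        = Matrix.toLin' A (fun j => y j) i := rfl
    simp [Matrix.toLin'_apply, Matrix.mulVec, dotProduct, Matrix.map_apply, Matrix.ofLp_toEuclideanCLM]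
  have hpow : (Matrix.toEuclideanCLM (𝕜 := ℝ) J) ^ m
      = Matrix.toEuclideanCLM (𝕜 := ℝ) (J ^ m) := (map_pow _ _ _).symm
  have hpowc : Lc ^ m = Matrix.toEuclideanCLM (𝕜 := ℂ) ((J ^ m).map (algebraMap ℝ ℂ)) := by
    rw [hLc, ← map_pow]
    congr 1
    rw [hJc, ← RingHom.mapMatrix_apply, ← RingHom.mapMatrix_apply, ← map_pow]
  have hcx : ((WithLp.equiv 2 (Fin n → ℂ)).symm fun i => ((x i : ℝ) : ℂ))
      = ((WithLp.equiv 2 (Fin n → ℂ)).symm fun i => ((x i : ℝ) : ℂ)) := rfl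
  calc ‖((Matrix.toEuclideanCLM (𝕜 := ℝ) J) ^ m) x‖
      = ‖Matrix.toEuclideanCLM (𝕜 := ℝ) (J ^ m) x‖ := by rw [hpow]
    _ = ‖(WithLp.equiv 2 (Fin n → ℂ)).symm
          fun i => (((Matrix.toEuclideanCLM (𝕜 := ℝ) (J ^ m) x) i : ℝ) : ℂ)‖ := (hnp _).symm
    _ = ‖Matrix.toEuclideanCLM (𝕜 := ℂ) ((J ^ m).map (algebraMap ℝ ℂ))
          ((WithLp.equiv 2 (Fin n → ℂ)).symm fun i => ((x i : ℝ) : ℂ))‖ := by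
        rw [hcomm (J ^ m) x]
    _ = ‖(Lc ^ m) ((WithLp.equiv 2 (Fin n → ℂ)).symm fun i => ((x i : ℝ) : ℂ))‖ := by
        rw [hpowc]
    _ ≤ ‖Lc ^ m‖ * ‖((WithLp.equiv 2 (Fin n → ℂ)).symm fun i => ((x i : ℝ) : ℂ))‖ :=
        (Lc ^ m).le_opNorm _
    _ = ‖Lc ^ m‖ * ‖x‖ := by rw [hnp]
    _ ≤ (θ : ℝ) ^ m * ‖x‖ := mul_le_mul_of_nonneg_right hnormR.le (norm_nonneg x)


/-- Ostrowski: if `H` is Fréchet-differentiable at a fixed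
point `x*` with Jacobian `J` whose (complex) spectral radius is `< 1`, then
`x*` is a point of attraction of the iteration `x^{(k+1)} = H(x^{(k)})`. -/
theorem stmt_10 {n : ℕ}
    (H : EuclideanSpace ℝ (Fin n) → EuclideanSpace ℝ (Fin n))
    (xstar : EuclideanSpace ℝ (Fin n))
    (hfix : H xstar = xstar)
    (J : Matrix (Fin n) (Fin n) ℝ)
    (hdiff : HasFDerivAt H
      (LinearMap.toContinuousLinearMap (Matrix.toEuclideanLin J)) xstar)
    (hspec : ∀ μ ∈ spectrum ℂ (J.map (algebraMap ℝ ℂ)), ‖μ‖ < 1) :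
    ∃ ε > 0, ∀ x0 : EuclideanSpace ℝ (Fin n), ‖x0 - xstar‖ < ε →
      Tendsto (fun k => H^[k] x0) atTop (nhds xstar) := by
  rcases Nat.eq_zero_or_pos n with rfl | hn
  · haveI : Subsingleton (EuclideanSpace ℝ (Fin 0)) :=
      ⟨fun a b => by ext i; exact i.elim0⟩
    refine ⟨1, one_pos, fun x0 _ => ?_⟩
    have hx : (fun k => H^[k] x0) = fun _ => xstar := funext fun k => Subsingleton.elim _ _
    rw [hx]
    exact tendsto_const_nhds
  · obtain ⟨m, hm1, t, ht0, ht1, hbd⟩ := ostrowski_spec hn J hspec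
    obtain ⟨m', rfl⟩ := Nat.exists_eq_succ_of_ne_zero (by omega : m ≠ 0)
    have hL : LinearMap.toContinuousLinearMap (Matrix.toEuclideanLin J)
        = Matrix.toEuclideanCLM (𝕜 := ℝ) J := rfl
    rw [hL] at hdiff
    exact ostrowski_aux2 H xstar hfix _ hdiff m' t ht0 ht1 hbd
end
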